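/- In the braid group Br_n, for every 1 ≤ i ≤ n and every m ≥ 1, the element X_{[1,n]}·X_{[n-i+1,n]}^{-1}·Y_{[n-i+1,n]}^{-1}·FT_n^m is conjugate in Br_n to X_{[i,n]}·Y_{[1,i]}^{-1}·FT_n^m. -/

import Mathlib

/-- The braid relations on `g` generators `σ_1,…,σ_g` (0-indexed here):
`σ_iσ_{i+1}σ_i = σ_{i+1}σ_iσ_{i+1}` and `σ_iσ_j = σ_jσ_i` for `|i-j| ≥ 2`. -/
def braidRelsSet (g : ℕ) : Set (FreeGroup (Fin g)) :=
  {r | (∃ i j : Fin g, (i : ℕ) + 1 = (j : ℕ) ∧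
          r = FreeGroup.of i * FreeGroup.of j * FreeGroup.of i *
              (FreeGroup.of j * FreeGroup.of i * FreeGroup.of j)⁻¹) ∨
       (∃ i j : Fin g, (i : ℕ) + 2 ≤ (j : ℕ) ∧
          r = FreeGroup.of i * FreeGroup.of j *
              (FreeGroup.of j * FreeGroup.of i)⁻¹)}

/-- The braid group `Br_n` on `n` strands, presented by generators
`σ_1,…,σ_{n-1}` and the braid relations. -/
def BraidGroup (n : ℕ) : Type := PresentedGroup (braidRelsSet (n - 1))

instance (n : ℕ) : Group (BraidGroup n) :=
  inferInstanceAs (Group (PresentedGroup (braidRelsSet (n - 1))))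

/-- The generator `σ_i` of `Br_n`, for `1 ≤ i ≤ n-1` (junk value `1` otherwise). -/
def σ (n i : ℕ) : BraidGroup n :=
  if h : i - 1 < n - 1 then PresentedGroup.of (⟨i - 1, h⟩ : Fin (n - 1)) else 1

/-- `X_{[i,j]} = σ_{j-1}σ_{j-2}⋯σ_i` in `Br_n` (empty product equals 1). -/
def Xb (n i j : ℕ) : BraidGroup n :=
  ((List.range (j - i)).map fun k => σ n (j - 1 - k)).prod

/-- `Y_{[i,j]} = σ_iσ_{i+1}⋯σ_{j-1}` in `Br_n` (empty product equals 1). -/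
def Yb (n i j : ℕ) : BraidGroup n :=
  ((List.range (j - i)).map fun k => σ n (i + k)).prod

/-- The half twist `HT_n = X_{[1,2]}X_{[1,3]}⋯X_{[1,n]}` in `Br_n`. -/
def HTb (n : ℕ) : BraidGroup n :=
  ((List.range (n - 1)).map fun k => Xb n 1 (k + 2)).prod

/-- The full twist `FT_n = (σ_{n-1}⋯σ_2σ_1)^n` in `Br_n`. -/
def FTb (n : ℕ) : BraidGroup n := Xb n 1 n ^ n

/-- The Jucys–Murphy braid `J_k = X_{[1,k]}Y_{[1,k]}` in `Br_n`. -/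
def Jb (n k : ℕ) : BraidGroup n := Xb n 1 k * Yb n 1 k

namespace BraidAux

lemma mk_eq_of_rel {g : ℕ} {x y : FreeGroup (Fin g)} (h : x * y⁻¹ ∈ braidRelsSet g) :
    PresentedGroup.mk (braidRelsSet g) x = PresentedGroup.mk (braidRelsSet g) y := by
  have h1 : PresentedGroup.mk (braidRelsSet g) (x * y⁻¹) = 1 :=
    (QuotientGroup.eq_one_iff _).mpr (Subgroup.subset_normalClosure h)
  rw [map_mul, map_inv] at h1
  exact mul_inv_eq_one.mp h1

lemma σ_pos {n i : ℕ} (h : i - 1 < n - 1) :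
    σ n i = (PresentedGroup.of (⟨i - 1, h⟩ : Fin (n - 1)) : BraidGroup n) := by
  unfold σ; exact dif_pos h

lemma σ_neg {n i : ℕ} (h : ¬ i - 1 < n - 1) : σ n i = 1 := by
  unfold σ; exact dif_neg h

lemma braid_rel1 {n : ℕ} (k : ℕ) (h1 : 1 ≤ k) (h2 : k + 1 ≤ n - 1) :
    σ n k * σ n (k+1) * σ n k = σ n (k+1) * σ n k * σ n (k+1) := by
  have hk : k - 1 < n - 1 := by omega
  have hk1 : k + 1 - 1 < n - 1 := by omega
  rw [σ_pos hk, σ_pos hk1]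
  have h := mk_eq_of_rel (g := n - 1)
    (x := FreeGroup.of ⟨k-1, hk⟩ * FreeGroup.of ⟨k+1-1, hk1⟩ * FreeGroup.of ⟨k-1, hk⟩)
    (y := FreeGroup.of ⟨k+1-1, hk1⟩ * FreeGroup.of ⟨k-1, hk⟩ * FreeGroup.of ⟨k+1-1, hk1⟩)
    (Or.inl ⟨⟨k-1, hk⟩, ⟨k+1-1, hk1⟩, by simp; omega, rfl⟩)
  simp [PresentedGroup.of, map_mul] at h; exact h

lemma braid_comm {n : ℕ} (k l : ℕ) (h1 : 1 ≤ k) (h : k + 2 ≤ l) :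
    σ n k * σ n l = σ n l * σ n k := by
  by_cases hl : l - 1 < n - 1
  · have hk : k - 1 < n - 1 := by omega
    rw [σ_pos hk, σ_pos hl]
    have h := mk_eq_of_rel (g := n - 1)
      (x := FreeGroup.of ⟨k-1, hk⟩ * FreeGroup.of ⟨l-1, hl⟩)
      (y := FreeGroup.of ⟨l-1, hl⟩ * FreeGroup.of ⟨k-1, hk⟩)
      (Or.inr ⟨⟨k-1, hk⟩, ⟨l-1, hl⟩, by simp; omega, rfl⟩)
    simp [PresentedGroup.of, map_mul] at h; exact h
  · rw [σ_neg (i := l) hl]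
    simp



lemma Xb_cons {n a b : ℕ} (h : a < b) :
    Xb n a b = σ n (b-1) * Xb n a (b-1) := by
  have hb : b - a = (b - 1 - a) + 1 := by omega
  rw [Xb, hb, List.range_succ_eq_map, List.map_cons, List.prod_cons, List.map_map, Xb]
  have he : ((fun k => σ n (b - 1 - k)) ∘ Nat.succ) = fun k => σ n (b - 1 - 1 - k) := by
    funext k; simp only [Function.comp_apply]; congr 1; omega
  rw [he, Nat.sub_zero]

lemma Yb_cons {n a b : ℕ} (h : a < b) :
    Yb n a b = σ n a * Yb n (a+1) b := by
  have hb : b - a = (b - (a+1)) + 1 := by omega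
  rw [Yb, hb, List.range_succ_eq_map, List.map_cons, List.prod_cons, List.map_map, Yb]
  have he : ((fun k => σ n (a + k)) ∘ Nat.succ) = fun k => σ n (a + 1 + k) := by
    funext k; simp only [Function.comp_apply]; congr 1; omega
  rw [he, Nat.add_zero]

lemma Xb_split {n a b c : ℕ} (h1 : 1 ≤ b) (h2 : a ≤ b) (h3 : b ≤ c) :
    Xb n a c = Xb n b c * Xb n a b := by
  have hc : c - a = (c - b) + (b - a) := by omega
  rw [Xb, hc, List.range_add, List.map_append, List.prod_append, List.map_map, Xb, Xb]
  congr 1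
  have he : ((fun k => σ n (c - 1 - k)) ∘ (fun k => c - b + k)) = fun k => σ n (b - 1 - k) := by
    funext k; simp only [Function.comp_apply]; congr 1; omega
  rw [he]

lemma Xb_empty {n a b : ℕ} (h : b ≤ a) : Xb n a b = 1 := by
  rw [Xb, show b - a = 0 from by omega]; simp

lemma Yb_empty {n a b : ℕ} (h : b ≤ a) : Yb n a b = 1 := by
  rw [Yb, show b - a = 0 from by omega]; simp

lemma comm_X_high {n a b m : ℕ} (h1 : 1 ≤ a) (h : b + 1 ≤ m) :
    σ n m * Xb n a b = Xb n a b * σ n m := by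
  induction b with
  | zero => rw [Xb]; simp
  | succ c ih =>
      by_cases hac : a < c + 1
      · rw [Xb_cons hac, Nat.add_sub_cancel, ← mul_assoc,
          ← braid_comm c m (by omega) (by omega), mul_assoc, ih (by omega), mul_assoc]
      · rw [Xb]; have : c + 1 - a = 0 := by omega
        rw [this]; simp

lemma comm_X_low {n a b m : ℕ} (h1 : 1 ≤ m) (h : m + 2 ≤ a) :
    σ n m * Xb n a b = Xb n a b * σ n m := by
  induction b with
  | zero => rw [Xb]; simp
  | succ c ih =>
      by_cases hac : a < c + 1
      · rw [Xb_cons hac, Nat.add_sub_cancel, ← mul_assoc, braid_comm m c h1 (by omega),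
          mul_assoc, ih, mul_assoc]
      · rw [Xb]; have : c + 1 - a = 0 := by omega
        rw [this]; simp



lemma delta_shift {n k : ℕ} (h2 : 2 ≤ k) (hk : k ≤ n - 1) :
    Xb n 1 n * σ n k = σ n (k-1) * Xb n 1 n := by
  have hkn : k + 1 ≤ n := by omega
  have hδ : Xb n 1 n = Xb n (k+1) n * (σ n k * (σ n (k-1) * Xb n 1 (k-1))) := by
    rw [Xb_split (a := 1) (b := k+1) (c := n) (by omega) (by omega) hkn,
        Xb_cons (a := 1) (b := k+1) (by omega), Nat.add_sub_cancel,
        Xb_cons (a := 1) (b := k) (by omega)]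
  have h3 := braid_rel1 (n := n) (k-1) (by omega) (by omega)
  rw [show k - 1 + 1 = k from by omega] at h3
  have hbr : ∀ x : BraidGroup n,
      σ n k * (σ n (k-1) * (σ n k * x)) = σ n (k-1) * (σ n k * (σ n (k-1) * x)) := by
    intro x
    rw [← mul_assoc, ← mul_assoc, ← h3, mul_assoc, mul_assoc]
  calc Xb n 1 n * σ n k
      = Xb n (k+1) n * (σ n k * (σ n (k-1) * (Xb n 1 (k-1) * σ n k))) := by
        rw [hδ]; simp only [mul_assoc]
    _ = Xb n (k+1) n * (σ n k * (σ n (k-1) * (σ n k * Xb n 1 (k-1)))) := by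
        rw [← comm_X_high (by omega) (by omega)]
    _ = Xb n (k+1) n * (σ n (k-1) * (σ n k * (σ n (k-1) * Xb n 1 (k-1)))) := by
        rw [hbr]
    _ = σ n (k-1) * (Xb n (k+1) n * (σ n k * (σ n (k-1) * Xb n 1 (k-1)))) := by
        rw [← mul_assoc, ← comm_X_low (by omega) (by omega), mul_assoc]
    _ = σ n (k-1) * Xb n 1 n := by rw [← hδ]

lemma X_shift {n a b : ℕ} (h2 : 2 ≤ a) (hb : b ≤ n) :
    Xb n 1 n * Xb n a b = Xb n (a-1) (b-1) * Xb n 1 n := by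
  induction b with
  | zero =>
      rw [Xb_empty (show (0:ℕ) ≤ a from by omega), Xb_empty (show (0:ℕ)-1 ≤ a-1 from by omega)]; simp
  | succ c ih =>
      by_cases hac : a < c + 1
      · rw [Xb_cons hac, Nat.add_sub_cancel, ← mul_assoc, delta_shift (by omega) (by omega),
          mul_assoc, ih (by omega), ← mul_assoc, ← Xb_cons (by omega : a - 1 < c)]
      · rw [Xb_empty (show c+1 ≤ a from by omega), Xb_empty (show c+1-1 ≤ a-1 from by omega)]; simp

lemma Y_shift {n a b : ℕ} (h2 : 2 ≤ a) (hb : b ≤ n) :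
    Xb n 1 n * Yb n a b = Yb n (a-1) (b-1) * Xb n 1 n := by
  generalize ht : b - a = t
  induction t generalizing a with
  | zero =>
      rw [Yb_empty (show b ≤ a from by omega), Yb_empty (show b-1 ≤ a-1 from by omega)]; simp
  | succ t ih =>
      have hab : a < b := by omega
      have hc : Yb n (a-1) (b-1) = σ n (a-1) * Yb n a (b-1) := by
        rw [Yb_cons (show a-1 < b-1 from by omega), show a - 1 + 1 = a from by omega]
      rw [Yb_cons hab, ← mul_assoc, delta_shift h2 (by omega),
        mul_assoc, ih (by omega) (by omega), ← mul_assoc,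
        show a + 1 - 1 = a from rfl, ← hc]

lemma Z_shift {n a b : ℕ} (h2 : 2 ≤ a) (hb : b ≤ n) :
    Xb n 1 n * ((Xb n a b)⁻¹ * (Yb n a b)⁻¹) =
      ((Xb n (a-1) (b-1))⁻¹ * (Yb n (a-1) (b-1))⁻¹) * Xb n 1 n := by
  have hx : Xb n 1 n * (Xb n a b)⁻¹ = (Xb n (a-1) (b-1))⁻¹ * Xb n 1 n := by
    rw [mul_inv_eq_iff_eq_mul, mul_assoc, X_shift h2 hb, ← mul_assoc,
      inv_mul_cancel, one_mul]
  have hy : Xb n 1 n * (Yb n a b)⁻¹ = (Yb n (a-1) (b-1))⁻¹ * Xb n 1 n := by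
    rw [mul_inv_eq_iff_eq_mul, mul_assoc, Y_shift h2 hb, ← mul_assoc,
      inv_mul_cancel, one_mul]
  rw [← mul_assoc, hx, mul_assoc, hy, ← mul_assoc]

lemma Z_iter {n : ℕ} (t : ℕ) : ∀ a b : ℕ, t + 1 ≤ a → b ≤ n →
    Xb n 1 n ^ t * ((Xb n a b)⁻¹ * (Yb n a b)⁻¹) =
      ((Xb n (a-t) (b-t))⁻¹ * (Yb n (a-t) (b-t))⁻¹) * Xb n 1 n ^ t := by
  induction t with
  | zero => intro a b _ _; simp
  | succ t ih =>
      intro a b ha hb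
      rw [pow_succ, mul_assoc, Z_shift (by omega) hb, ← mul_assoc,
        ih (a-1) (b-1) (by omega) (by omega), mul_assoc, ← pow_succ,
        show a - 1 - t = a - (t+1) from by omega,
        show b - 1 - t = b - (t+1) from by omega]

end BraidAux



/-- In `Br_n`, for every `1 ≤ i ≤ n` and `m ≥ 1`, the element
`X_{[1,n]}·X_{[n-i+1,n]}⁻¹·Y_{[n-i+1,n]}⁻¹·FT_n^m` is conjugate in `Br_n` to
`X_{[i,n]}·Y_{[1,i]}⁻¹·FT_n^m`. -/
theorem stmt17 (n i m : ℕ) (hi1 : 1 ≤ i) (hi2 : i ≤ n) (hm : 1 ≤ m) :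
    IsConj
      (Xb n 1 n * (Xb n (n - i + 1) n)⁻¹ * (Yb n (n - i + 1) n)⁻¹ * FTb n ^ m)
      (Xb n i n * (Yb n 1 i)⁻¹ * FTb n ^ m) := by
  have hn : 1 ≤ n := le_trans hi1 hi2
  set j := n - i with hj
  set d := Xb n 1 n with hd
  have h1 : d ^ j * ((Xb n (j+1) n)⁻¹ * (Yb n (j+1) n)⁻¹) =
      ((Xb n 1 i)⁻¹ * (Yb n 1 i)⁻¹) * d ^ j := by
    have := BraidAux.Z_iter (n := n) j (j+1) n (by omega) le_rfl
    rwa [show j + 1 - j = 1 from by omega, show n - j = i from by omega] at this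
  have h2 : Xb n i n = d * (Xb n 1 i)⁻¹ := by
    rw [hd, BraidAux.Xb_split (b := i) hi1 hi1 hi2, mul_inv_cancel_right]
  have hF : FTb n ^ m = d ^ (n * m) := by rw [FTb, ← pow_mul]
  rw [isConj_iff]
  refine ⟨d ^ j, ?_⟩
  have hZ : (Xb n (j+1) n)⁻¹ * (Yb n (j+1) n)⁻¹ =
      (d ^ j)⁻¹ * (((Xb n 1 i)⁻¹ * (Yb n 1 i)⁻¹) * d ^ j) := by
    rw [← h1, ← mul_assoc, inv_mul_cancel, one_mul]
  rw [hF, h2, mul_assoc d (Xb n (j+1) n)⁻¹ (Yb n (j+1) n)⁻¹, hZ]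
  group
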